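/- Let λ ∈ ℝ with λ ≠ 0 and let A_λ be the fuzzy sphere algebra with generators x₁, x₂, x₃. Define the 2×2 matrices over A_λ: P := (1/2)·[[(1+λ)·1 − x₃, x₁ + i x₂], [x₁ − i x₂, (1+λ)·1 + x₃]], and for each k ∈ {1,2,3} set ∂_k x_i := Σ_j ε_{ijk} x_j, ∂_k P := (1/2)·[[−∂_k x₃, ∂_k x₁ + i ∂_k x₂], [∂_k x₁ − i ∂_k x₂, ∂_k x₃]], and Q₁ := [[0,1],[1,0]], Q₂ := [[0,i],[−i,0]], Q₃ := [[−1,0],[0,1]] (scalar matrices). Then for each k ∈ {1,2,3}: (∂_k P)·P = ((1+λ)/2)·∂_k P − (i/2)·(P · x_k) + (i(1−λ²)/4)·Q_k + (i(1−λ)/4)·x_k·I₂, where P·x_k means each entry of P multiplied on the right by x_k. (This is the coefficient form, with respect to the central basis s^k, of the Grassmann connection identity dP·P = ((1+λ)/2)dP + λPθ + (i(1−λ²)/4)Q − (λ(1−λ)/2)θ·I₂ with θ = (1/(2iλ)) x_k s^k.) -/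

import Mathlib

open scoped BigOperators

/-- The Levi-Civita symbol on `{1,2,3}` (totally antisymmetric, `ε₁₂₃ = 1`), as a complex
number. -/
noncomputable def epsC (i j k : Fin 3) : ℂ :=
  (((j : ℕ) : ℂ) - ((i : ℕ) : ℂ)) * (((k : ℕ) : ℂ) - ((j : ℕ) : ℂ)) *
    (((k : ℕ) : ℂ) - ((i : ℕ) : ℂ)) / 2

/-- The defining relations of the fuzzy sphere algebra: the commutation relations
`x_i x_j − x_j x_i = 2iλ ε_{ijk} x_k` and the sphere relation `Σ x_i² = 1 − λ²`. -/
inductive FuzzyRel (t : ℝ) : FreeAlgebra ℂ (Fin 3) → FreeAlgebra ℂ (Fin 3) → Prop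
  | comm (i j : Fin 3) : FuzzyRel t
      (FreeAlgebra.ι ℂ i * FreeAlgebra.ι ℂ j - FreeAlgebra.ι ℂ j * FreeAlgebra.ι ℂ i)
      (∑ k, (2 * Complex.I * (t : ℂ) * epsC i j k) • FreeAlgebra.ι ℂ k)
  | sphere : FuzzyRel t (∑ i, FreeAlgebra.ι ℂ i * FreeAlgebra.ι ℂ i)
      ((1 - (t : ℂ) ^ 2) • (1 : FreeAlgebra ℂ (Fin 3)))

/-- The fuzzy sphere algebra `A_λ`, the quotient of the free algebra on `x₁,x₂,x₃` by the
two-sided ideal generated by the fuzzy sphere relations. -/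
abbrev FuzzyS2 (t : ℝ) := RingQuot (FuzzyRel t)

/-- The generators `x_i` of the fuzzy sphere algebra. -/
noncomputable def xgen (t : ℝ) (i : Fin 3) : FuzzyS2 t :=
  RingQuot.mkAlgHom ℂ (FuzzyRel t) (FreeAlgebra.ι ℂ i)

/-- The partial derivative coefficients `∂_k x_i = Σ_j ε_{ijk} x_j` coming from
`dx_i = ε_{ijk} x_j s^k`. -/
noncomputable def pd (t : ℝ) (k i : Fin 3) : FuzzyS2 t :=
  ∑ j, epsC i j k • xgen t j

/-- The fuzzy monopole projector `P`. -/
noncomputable def Pmat (t : ℝ) : Matrix (Fin 2) (Fin 2) (FuzzyS2 t) :=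
  (2 : ℂ)⁻¹ • !![((1 : ℂ) + t) • 1 - xgen t 2, xgen t 0 + Complex.I • xgen t 1;
    xgen t 0 - Complex.I • xgen t 1, ((1 : ℂ) + t) • 1 + xgen t 2]

/-- The coefficient `∂_k P` of `s^k` in `dP`. -/
noncomputable def dPmat (t : ℝ) (k : Fin 3) : Matrix (Fin 2) (Fin 2) (FuzzyS2 t) :=
  (2 : ℂ)⁻¹ • !![-(pd t k 2), pd t k 0 + Complex.I • pd t k 1;
    pd t k 0 - Complex.I • pd t k 1, pd t k 2]

/-- The scalar matrices `Q₁ = [[0,1],[1,0]]`, `Q₂ = [[0,i],[−i,0]]`, `Q₃ = [[−1,0],[0,1]]`. -/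
noncomputable def Qmat (t : ℝ) : Fin 3 → Matrix (Fin 2) (Fin 2) (FuzzyS2 t) :=
  ![!![0, 1; 1, 0],
    !![0, Complex.I • (1 : FuzzyS2 t); -(Complex.I • (1 : FuzzyS2 t)), 0],
    !![-1, 0; 0, 1]]

section FuzzyAux

variable (t : ℝ)

private lemma fuzzy_hcomm (i j : Fin 3) : xgen t i * xgen t j - xgen t j * xgen t i
    = ∑ k, (2 * Complex.I * (t : ℂ) * epsC i j k) • xgen t k := by
  have h := RingQuot.mkAlgHom_rel ℂ (FuzzyRel.comm (t := t) i j)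
  simpa [xgen, map_sub, map_mul, map_sum, map_smul] using h

private lemma fuzzy_hsphere : ∑ i, xgen t i * xgen t i = ((1 : ℂ) - (t:ℂ)^2) • 1 := by
  have h := RingQuot.mkAlgHom_rel ℂ (FuzzyRel.sphere (t := t))
  simpa [xgen, map_sum, map_mul, map_smul] using h

private lemma fuzzy_myneg (a : FuzzyS2 t) : -a = ((-1 : ℂ)) • a := (neg_one_smul ℂ a).symm

private lemma fuzzy_mysub (a b : FuzzyS2 t) : a - b = a + ((-1 : ℂ)) • b := by
  rw [← fuzzy_myneg t b]; exact sub_eq_add_neg a b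

private lemma fuzzy_x10 :
    xgen t 1 * xgen t 0 = xgen t 0 * xgen t 1 + (-(2 * Complex.I * (t:ℂ))) • xgen t 2 := by
  have h := fuzzy_hcomm t 0 1
  norm_num [Fin.sum_univ_three, epsC] at h
  linear_combination (norm := module) -h

private lemma fuzzy_x21 :
    xgen t 2 * xgen t 1 = xgen t 1 * xgen t 2 + (-(2 * Complex.I * (t:ℂ))) • xgen t 0 := by
  have h := fuzzy_hcomm t 1 2
  norm_num [Fin.sum_univ_three, epsC] at h
  linear_combination (norm := module) -h

private lemma fuzzy_x20 :
    xgen t 2 * xgen t 0 = xgen t 0 * xgen t 2 + (2 * Complex.I * (t:ℂ)) • xgen t 1 := by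
  have h := fuzzy_hcomm t 2 0
  norm_num [Fin.sum_univ_three, epsC] at h
  linear_combination (norm := module) h

private lemma fuzzy_x22 :
    xgen t 2 * xgen t 2 = ((1:ℂ) - (t:ℂ)^2) • 1 + ((-1:ℂ)) • (xgen t 0 * xgen t 0)
    + ((-1:ℂ)) • (xgen t 1 * xgen t 1) := by
  have h := fuzzy_hsphere t
  rw [Fin.sum_univ_three] at h
  linear_combination (norm := module) h

private lemma fuzzy_Isq : Complex.I ^ 2 = -1 := Complex.I_sq
private lemma fuzzy_Icube : Complex.I ^ 3 = -Complex.I := by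
  rw [pow_succ, Complex.I_sq]; ring
private lemma fuzzy_Ifour : Complex.I ^ 4 = 1 := by
  rw [show (4:ℕ) = 2*2 from rfl, pow_mul, Complex.I_sq]; ring

end FuzzyAux

set_option maxHeartbeats 4000000 in
/-- Coefficient form, with respect to the central basis `s^k`, of the Grassmann connection
identity `dP·P = ((1+λ)/2)dP + λPθ + (i(1−λ²)/4)Q − (λ(1−λ)/2)θ·I₂` for the fuzzy monopole:
for each `k`,
`(∂_k P)·P = ((1+λ)/2)·∂_k P − (i/2)·(P·x_k) + (i(1−λ²)/4)·Q_k + (i(1−λ)/4)·x_k·I₂`. -/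
theorem grassmann_connection_coefficients (t : ℝ) (ht : t ≠ 0) (k : Fin 3) :
    dPmat t k * Pmat t =
      ((((1 : ℂ) + t) / 2) • dPmat t k) -
        ((Complex.I / 2) • Matrix.of fun a b => Pmat t a b * xgen t k) +
        ((Complex.I * (1 - (t : ℂ) ^ 2) / 4) • Qmat t k) +
        ((Complex.I * (1 - (t : ℂ)) / 4) •
          (xgen t k • (1 : Matrix (Fin 2) (Fin 2) (FuzzyS2 t)))) := by
  have hk : k = 0 ∨ k = 1 ∨ k = 2 := by omega
  rcases hk with rfl | rfl | rfl <;> ext a b <;> fin_cases a <;> fin_cases b <;>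
  · simp only [Pmat, dPmat, Qmat, pd, Fin.sum_univ_three, epsC, Matrix.mul_apply,
      Fin.sum_univ_two, Matrix.smul_apply, Matrix.sub_apply, Matrix.add_apply,
      Matrix.of_apply, Matrix.cons_val', Matrix.cons_val_zero, Matrix.cons_val_one, Matrix.cons_val_two,
      Matrix.head_cons, Matrix.head_fin_const, Matrix.empty_val', Matrix.cons_val_fin_one,
      Matrix.one_apply_eq, Matrix.one_apply, Fin.isValue]
    norm_num
    simp only [fuzzy_mysub t, fuzzy_myneg t]
    simp only [mul_add, add_mul, smul_mul_assoc, mul_smul_comm, mul_one, one_mul,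
      smul_add, smul_smul, fuzzy_x10 t, fuzzy_x20 t, fuzzy_x21 t, fuzzy_x22 t]
    match_scalars
    all_goals try ring_nf
    all_goals try simp only [fuzzy_Isq, fuzzy_Icube, fuzzy_Ifour, neg_neg, neg_mul, mul_neg,
      one_mul, mul_one]
    all_goals try ring_nf
    all_goals try ring
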